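/- arXiv:1403.1183 — 3 statements merged into one kernel-verified Lean document; each statement's English description precedes it below -/
import Mathlib

section
/- For a > 0 and μ ∈ ℝ, σ > 0, letting γ = 2μ/σ², the limits lim_{λ→0+} b_λ and lim_{λ→0+} c_λ both equal γ/(e^{γa} - 1) when μ ≠ 0, and both equal 1/a when μ = 0. -/
open Real Filter

private lemma slope_lim' (a : ℝ) :
    Tendsto (fun x : ℝ => (Real.exp (x*a) - Real.exp (-(x*a))) / x)
      (nhdsWithin 0 {(0:ℝ)}ᶜ) (nhds (2*a)) := by
  have h : HasDerivAt (fun x : ℝ => Real.exp (x*a) - Real.exp (-(x*a))) (2*a) 0 := by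
    have h1 : HasDerivAt (fun x : ℝ => Real.exp (x*a)) a 0 := by
      simpa using ((hasDerivAt_id (0:ℝ)).mul_const a).exp
    have h2 : HasDerivAt (fun x : ℝ => Real.exp (-(x*a))) (-a) 0 := by
      simpa using (((hasDerivAt_id (0:ℝ)).mul_const a).neg).exp
    have := h1.sub h2
    exact this.congr_deriv (by ring)
  have h' := hasDerivAt_iff_tendsto_slope.mp h
  refine h'.congr fun x => ?_
  simp [slope_def_field, div_eq_mul_inv]

private lemma F_lim (a : ℝ) (ha : 0 < a) :
    Tendsto (fun x : ℝ =>
      (x * Real.exp (x*a) + x * Real.exp (-(x*a))) / (Real.exp (x*a) - Real.exp (-(x*a))))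
      (nhdsWithin 0 {(0:ℝ)}ᶜ) (nhds (1/a)) := by
  have hnum : Tendsto (fun x : ℝ => Real.exp (x*a) + Real.exp (-(x*a)))
      (nhdsWithin 0 {(0:ℝ)}ᶜ) (nhds 2) := by
    have hc : Continuous fun x : ℝ => Real.exp (x*a) + Real.exp (-(x*a)) := by fun_prop
    have h0 : (fun x : ℝ => Real.exp (x*a) + Real.exp (-(x*a))) 0 = 2 := by norm_num
    rw [← h0]
    exact (hc.tendsto 0).mono_left nhdsWithin_le_nhds
  have h2a : (2*a : ℝ) ≠ 0 := by positivity
  have hdiv := hnum.div (slope_lim' a) h2a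
  have hval : (2 : ℝ) / (2*a) = 1/a := by field_simp
  rw [hval] at hdiv
  refine hdiv.congr' ?_
  filter_upwards [self_mem_nhdsWithin] with x hx
  have hx' : x ≠ 0 := hx
  simp only [Pi.div_apply]
  rw [div_div_eq_mul_div]
  congr 1
  ring

private lemma G_lim (a : ℝ) (ha : 0 < a) :
    Tendsto (fun x : ℝ =>
      (x + x) / (Real.exp (x*a) - Real.exp (-(x*a))))
      (nhdsWithin 0 {(0:ℝ)}ᶜ) (nhds (1/a)) := by
  have h2a : (2*a : ℝ) ≠ 0 := by positivity
  have hdiv := (tendsto_const_nhds (x := (2:ℝ))).div (slope_lim' a) h2a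
  have hval : (2 : ℝ) / (2*a) = 1/a := by field_simp
  rw [hval] at hdiv
  refine hdiv.congr' ?_
  filter_upwards [self_mem_nhdsWithin] with x hx
  have hx' : x ≠ 0 := hx
  simp only [Pi.div_apply]
  rw [div_div_eq_mul_div]
  congr 1
  ring

theorem stmt_3 (μ σ a γ : ℝ) (hσ : 0 < σ) (ha : 0 < a) (hγ : γ = 2 * μ / σ ^ 2)
    (βp βm b c : ℝ → ℝ)
    (hβp : ∀ lam, βp lam = (-μ + Real.sqrt (μ ^ 2 + 2 * lam * σ ^ 2)) / σ ^ 2)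
    (hβm : ∀ lam, βm lam = (-μ - Real.sqrt (μ ^ 2 + 2 * lam * σ ^ 2)) / σ ^ 2)
    (hb : ∀ lam, b lam = (βp lam * Real.exp (-(βm lam) * a) - βm lam * Real.exp (-(βp lam) * a)) /
      (Real.exp (-(βm lam) * a) - Real.exp (-(βp lam) * a)))
    (hc : ∀ lam, c lam = (βp lam - βm lam) /
      (Real.exp (-(βm lam) * a) - Real.exp (-(βp lam) * a))) :
    (μ ≠ 0 →
      Tendsto b (nhdsWithin 0 (Set.Ioi 0)) (nhds (γ / (Real.exp (γ * a) - 1))) ∧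
      Tendsto c (nhdsWithin 0 (Set.Ioi 0)) (nhds (γ / (Real.exp (γ * a) - 1)))) ∧
    (μ = 0 →
      Tendsto b (nhdsWithin 0 (Set.Ioi 0)) (nhds (1 / a)) ∧
      Tendsto c (nhdsWithin 0 (Set.Ioi 0)) (nhds (1 / a))) := by
  have hσ2 : (0:ℝ) < σ^2 := by positivity
  have hsq : Tendsto (fun lam : ℝ => Real.sqrt (μ^2 + 2*lam*σ^2)) (nhds 0) (nhds |μ|) := by
    have hc : Continuous fun lam : ℝ => Real.sqrt (μ^2 + 2*lam*σ^2) := by fun_prop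
    have := hc.tendsto 0
    simpa [Real.sqrt_sq_eq_abs] using this
  set p : ℝ := (-μ + |μ|)/σ^2 with hp
  set m : ℝ := (-μ - |μ|)/σ^2 with hm
  have hβp' : Tendsto βp (nhds 0) (nhds p) := by
    rw [show βp = fun lam => (-μ + Real.sqrt (μ^2+2*lam*σ^2))/σ^2 from funext hβp]
    exact (tendsto_const_nhds.add hsq).div_const _
  have hβm' : Tendsto βm (nhds 0) (nhds m) := by
    rw [show βm = fun lam => (-μ - Real.sqrt (μ^2+2*lam*σ^2))/σ^2 from funext hβm]
    exact (tendsto_const_nhds.sub hsq).div_const _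
  constructor
  · intro hμ
    have habs : 0 < |μ| := abs_pos.mpr hμ
    have hmp : m < p := by
      rw [hm, hp]
      exact (div_lt_div_iff_of_pos_right hσ2).mpr (by linarith)
    have hγ0 : γ ≠ 0 := by
      rw [hγ]; exact div_ne_zero (mul_ne_zero two_ne_zero hμ) (ne_of_gt hσ2)
    have hγa : γ * a ≠ 0 := mul_ne_zero hγ0 (ne_of_gt ha)
    have hE1 : Real.exp (γ*a) - 1 ≠ 0 := by
      refine sub_ne_zero.mpr fun h => hγa ?_
      rw [← Real.exp_zero] at h
      exact Real.exp_injective h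
    have hne : -m*a ≠ -p*a := by
      have h1 : -p*a < -m*a := by nlinarith
      exact h1.ne'
    have hden_ne : Real.exp (-m*a) - Real.exp (-p*a) ≠ 0 :=
      sub_ne_zero.mpr fun h => hne (Real.exp_injective h)
    have hEm : Tendsto (fun lam => Real.exp (-(βm lam)*a)) (nhds 0)
        (nhds (Real.exp (-m*a))) :=
      (Real.continuous_exp.tendsto _).comp ((hβm'.neg).mul_const a)
    have hEp : Tendsto (fun lam => Real.exp (-(βp lam)*a)) (nhds 0)
        (nhds (Real.exp (-p*a))) :=
      (Real.continuous_exp.tendsto _).comp ((hβp'.neg).mul_const a)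
    have hbT : Tendsto b (nhds 0)
        (nhds ((p*Real.exp (-m*a) - m*Real.exp (-p*a))/(Real.exp (-m*a)-Real.exp (-p*a)))) := by
      rw [funext hb]
      exact ((hβp'.mul hEm).sub (hβm'.mul hEp)).div (hEm.sub hEp) hden_ne
    have hcT : Tendsto c (nhds 0)
        (nhds ((p - m)/(Real.exp (-m*a)-Real.exp (-p*a)))) := by
      rw [funext hc]
      exact (hβp'.sub hβm').div (hEm.sub hEp) hden_ne
    have hvb : (p*Real.exp (-m*a) - m*Real.exp (-p*a))/(Real.exp (-m*a)-Real.exp (-p*a))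
        = γ/(Real.exp (γ*a)-1) := by
      rcases hμ.lt_or_gt with h | h
      · have ha1 : |μ| = -μ := abs_of_neg h
        have hp0 : p = -γ := by rw [hp, ha1, hγ]; ring
        have hm0 : m = 0 := by rw [hm, ha1]; ring
        rw [hp0, hm0]
        simp only [neg_zero, zero_mul, neg_neg, Real.exp_zero, mul_one, zero_mul, sub_zero]
        rw [div_eq_div_iff (by
          refine sub_ne_zero.mpr fun hh => hγa ?_
          rw [← Real.exp_zero] at hh
          exact (Real.exp_injective hh).symm) hE1]
        ring
      · have ha1 : |μ| = μ := abs_of_pos h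
        have hp0 : p = 0 := by rw [hp, ha1]; ring
        have hm0 : m = -γ := by rw [hm, ha1, hγ]; ring
        rw [hp0, hm0]
        simp only [neg_zero, zero_mul, neg_neg, Real.exp_zero, mul_one, zero_sub, sub_zero]
    have hvc : (p - m)/(Real.exp (-m*a)-Real.exp (-p*a)) = γ/(Real.exp (γ*a)-1) := by
      rcases hμ.lt_or_gt with h | h
      · have ha1 : |μ| = -μ := abs_of_neg h
        have hp0 : p = -γ := by rw [hp, ha1, hγ]; ring
        have hm0 : m = 0 := by rw [hm, ha1]; ring
        rw [hp0, hm0]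
        simp only [neg_zero, zero_mul, neg_neg, Real.exp_zero, sub_zero]
        rw [div_eq_div_iff (by
          refine sub_ne_zero.mpr fun hh => hγa ?_
          rw [← Real.exp_zero] at hh
          exact (Real.exp_injective hh).symm) hE1]
        ring
      · have ha1 : |μ| = μ := abs_of_pos h
        have hp0 : p = 0 := by rw [hp, ha1]; ring
        have hm0 : m = -γ := by rw [hm, ha1, hγ]; ring
        rw [hp0, hm0]
        simp only [neg_zero, zero_mul, neg_neg, Real.exp_zero, zero_sub, sub_zero, sub_neg_eq_add,
          zero_add]
    rw [hvb] at hbT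
    rw [hvc] at hcT
    exact ⟨hbT.mono_left nhdsWithin_le_nhds, hcT.mono_left nhdsWithin_le_nhds⟩
  · intro hμ
    subst hμ
    have hp0 : p = 0 := by rw [hp]; simp
    have hmb : ∀ lam, βm lam = -βp lam := fun lam => by rw [hβp, hβm]; ring
    have hpos : ∀ lam ∈ Set.Ioi (0:ℝ), 0 < βp lam := by
      intro lam hlam
      have h1 : 0 < Real.sqrt ((0:ℝ)^2 + 2*lam*σ^2) :=
        Real.sqrt_pos.mpr (by have := Set.mem_Ioi.mp hlam; positivity)
      rw [hβp]
      simp only [neg_zero, zero_add]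
      exact div_pos h1 hσ2
    have hmap : Tendsto βp (nhdsWithin 0 (Set.Ioi 0)) (nhdsWithin 0 {(0:ℝ)}ᶜ) := by
      rw [tendsto_nhdsWithin_iff]
      constructor
      · have h := hβp'.mono_left (nhdsWithin_le_nhds (s := Set.Ioi (0:ℝ)) (a := (0:ℝ)))
        rwa [hp0] at h
      · filter_upwards [self_mem_nhdsWithin] with lam hlam
        exact (hpos lam hlam).ne'
    refine ⟨?_, ?_⟩
    · refine ((F_lim a ha).comp hmap).congr fun lam => ?_
      simp only [Function.comp_apply]
      rw [hb lam, hmb lam]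
      simp [neg_mul, neg_neg, sub_neg_eq_add]
    · refine ((G_lim a ha).comp hmap).congr fun lam => ?_
      simp only [Function.comp_apply]
      rw [hc lam, hmb lam]
      simp [neg_mul, neg_neg, sub_neg_eq_add]
end

section
/- Fix θ > 0. The function p(m) = θ(θ + θm)^{m-1}e^{-θ-θm}/m! = (m+1)^{m-1}θ^m e^{-(m+1)θ}/m! defines a probability mass function on ℕ, i.e., ∑_{m=0}^∞ (m+1)^{m-1} θ^m e^{-(m+1)θ}/m! = 1, provided θ ≤ 1. -/
open Real

open Finset Filter


/-- Finite-difference step. -/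
lemma diff_step (f : ℕ → ℝ) (m : ℕ) :
    ∑ k ∈ range (m+2), (-1:ℝ)^k * (m+1).choose k * f k
      = ∑ k ∈ range (m+1), (-1:ℝ)^k * m.choose k * (f k - f (k+1)) := by
  have hL : ∑ k ∈ range (m+2), (-1:ℝ)^k * (m+1).choose k * f k
      = (∑ k ∈ range (m+1), (-1:ℝ)^(k+1) * ((m.choose k : ℝ) + m.choose (k+1)) * f (k+1))
        + f 0 := by
    rw [Finset.sum_range_succ' _ (m+1)]
    simp [Nat.choose_succ_succ]
  have hR : ∑ k ∈ range (m+1), (-1:ℝ)^k * m.choose k * f k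
      = (∑ k ∈ range m, (-1:ℝ)^(k+1) * (m.choose (k+1) : ℝ) * f (k+1)) + f 0 := by
    rw [Finset.sum_range_succ' _ m]
    simp
  rw [hL]
  simp only [mul_sub, Finset.sum_sub_distrib]
  rw [hR]
  have htrunc : ∑ k ∈ range (m+1), (-1:ℝ)^(k+1) * (m.choose (k+1) : ℝ) * f (k+1)
      = ∑ k ∈ range m, (-1:ℝ)^(k+1) * (m.choose (k+1) : ℝ) * f (k+1) := by
    rw [Finset.sum_range_succ]
    simp [Nat.choose_succ_self]
  have expand : ∀ k, (-1:ℝ)^(k+1) * ((m.choose k : ℝ) + m.choose (k+1)) * f (k+1)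
      = (-1:ℝ)^(k+1) * (m.choose k : ℝ) * f (k+1) + (-1:ℝ)^(k+1) * (m.choose (k+1) : ℝ) * f (k+1) := by
    intro k; ring
  calc (∑ k ∈ range (m+1), (-1:ℝ)^(k+1) * ((m.choose k : ℝ) + m.choose (k+1)) * f (k+1)) + f 0
      = (∑ k ∈ range (m+1), ((-1:ℝ)^(k+1) * (m.choose k : ℝ) * f (k+1)
          + (-1:ℝ)^(k+1) * (m.choose (k+1) : ℝ) * f (k+1))) + f 0 := by
        rw [Finset.sum_congr rfl fun k _ => expand k]
    _ = (∑ k ∈ range (m+1), (-1:ℝ)^(k+1) * (m.choose k : ℝ) * f (k+1))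
          + ((∑ k ∈ range m, (-1:ℝ)^(k+1) * (m.choose (k+1) : ℝ) * f (k+1)) + f 0) := by
        rw [Finset.sum_add_distrib, htrunc]; ring
    _ = _ := by
        rw [← hR]
        have : ∑ k ∈ range (m+1), (-1:ℝ)^(k+1) * (m.choose k : ℝ) * f (k+1)
            = - ∑ k ∈ range (m+1), (-1:ℝ)^k * (m.choose k : ℝ) * f (k+1) := by
          rw [← Finset.sum_neg_distrib]
          apply Finset.sum_congr rfl; intro k _; ring
        rw [this]; ring

/-- Alternating sums of binomials against low-degree polynomials vanish. -/
lemma alt_sum_zero : ∀ m : ℕ, ∀ j < m, ∀ x : ℝ,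
    ∑ k ∈ range (m+1), (-1:ℝ)^k * m.choose k * (x + k)^j = 0 := by
  intro m
  induction m with
  | zero => intro j hj; exact absurd hj (Nat.not_lt_zero j)
  | succ m ih =>
    intro j hj x
    rw [show m+1+1 = m+2 from rfl, diff_step (fun k => (x + k)^j) m]
    have hdiff : ∀ k : ℕ, (x + (k:ℝ))^j - (x + ((k+1:ℕ):ℝ))^j
        = - ∑ i ∈ range j, (j.choose i : ℝ) * (x + k)^i := by
      intro k
      have hb : (x + ((k+1:ℕ):ℝ))^j = ((x + k) + 1)^j := by push_cast; ring_nf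
      rw [hb]
      generalize (x + (k:ℝ)) = a
      rw [add_pow, Finset.sum_range_succ]
      simp only [one_pow, mul_one, Nat.choose_self, Nat.cast_one]
      have : ∑ i ∈ range j, (j.choose i : ℝ) * a^i = ∑ i ∈ range j, a^i * (j.choose i : ℝ) :=
        Finset.sum_congr rfl fun i _ => mul_comm _ _
      rw [this]
      ring
    calc ∑ k ∈ range (m+1), (-1:ℝ)^k * m.choose k * ((fun k:ℕ => (x + k)^j) k - (fun k:ℕ => (x + k)^j) (k+1))
        = ∑ i ∈ range j, ∑ k ∈ range (m+1), (j.choose i : ℝ) * -((-1:ℝ)^k * m.choose k * (x+k)^i) := by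
          rw [Finset.sum_comm]
          apply Finset.sum_congr rfl; intro k _
          simp only
          rw [hdiff k, mul_neg, Finset.mul_sum, ← Finset.sum_neg_distrib]
          apply Finset.sum_congr rfl; intro i _; ring
      _ = 0 := by
          apply Finset.sum_eq_zero
          intro i hi
          have hij := Finset.mem_range.mp hi
          have hz := ih i (by omega) x
          calc ∑ k ∈ range (m+1), (j.choose i : ℝ) * -((-1:ℝ)^k * m.choose k * (x+k)^i)
              = (j.choose i : ℝ) * -(∑ k ∈ range (m+1), (-1:ℝ)^k * m.choose k * (x+k)^i) := by
                rw [← Finset.sum_neg_distrib, ← Finset.mul_sum]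
            _ = 0 := by rw [hz]; ring


noncomputable def abelTerm (n k : ℕ) (x y : ℝ) : ℝ :=
  (n.choose k : ℝ) * (if k = 0 then 1 else x) * (x+k)^(k-1) * (y-k)^(n-k)

lemma choose_mul_sub (n k : ℕ) : (n+1).choose k * (n+1-k) = (n+1) * n.choose k := by
  have h1 := Nat.choose_succ_right_eq (n+1) k
  have h2 := Nat.add_one_mul_choose_eq n k
  omega

lemma abel_eval_neg (m : ℕ) (hm : 1 ≤ m) (x : ℝ) :
    ∑ k ∈ range (m+1), abelTerm m k x (-x) = 0 := by
  have key : ∀ k ∈ range (m+1), abelTerm m k x (-x)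
      = (-1:ℝ)^m * x * ((-1:ℝ)^k * (m.choose k : ℝ) * (x+k)^(m-1)) := by
    intro k hk
    have hk' : k ≤ m := by simpa [Nat.lt_succ_iff] using hk
    have hneg : (-x - (k:ℝ)) = -(x + k) := by ring
    have hpow : (-x - (k:ℝ))^(m-k) = (-1:ℝ)^(m-k) * (x+k)^(m-k) := by
      rw [hneg, neg_pow]
    have hsign : (-1:ℝ)^(m-k) = (-1:ℝ)^m * (-1:ℝ)^k := by
      have : (-1:ℝ)^(m-k) * (-1:ℝ)^k = (-1:ℝ)^m := by
        rw [← pow_add]; congr 1; omega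
      have h4 : ((-1:ℝ)^k) * ((-1:ℝ)^k) = 1 := by
        rw [← pow_add, ← two_mul, pow_mul]; norm_num
      linear_combination ((-1:ℝ)^k) * this - ((-1:ℝ)^(m-k)) * h4
    unfold abelTerm
    rcases Nat.eq_zero_or_pos k with rfl | hkpos
    · simp only [if_pos rfl]
      rw [hpow, hsign]
      have hx : x^(m-1) * x^1 = x^m := by
        rw [← pow_add]; congr 1; omega
      simp only [Nat.cast_zero, add_zero, Nat.sub_zero, Nat.choose_zero_right, Nat.cast_one,
        pow_zero, if_true]
      linear_combination (-((-1:ℝ)^m)) * hx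
    · rw [if_neg (by omega)]
      rw [hpow, hsign]
      have hx : (x + (k:ℝ))^(k-1) * (x + (k:ℝ))^(m-k) = (x + (k:ℝ))^(m-1) := by
        rw [← pow_add]; congr 1; omega
      linear_combination ((-1:ℝ)^m * (-1:ℝ)^k * (m.choose k : ℝ) * x) * hx
  rw [Finset.sum_congr rfl key, ← Finset.mul_sum, alt_sum_zero m (m-1) (by omega) x, mul_zero]

theorem abel_sum : ∀ (n : ℕ) (x y : ℝ),
    ∑ k ∈ range (n+1), abelTerm n k x y = (x+y)^n := by
  intro n
  induction n with
  | zero => intro x y; simp [abelTerm]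
  | succ n ih =>
    intro x y
    -- derivative of the sum in y
    have hF : ∀ z : ℝ, HasDerivAt (fun y => ∑ k ∈ range (n+2), abelTerm (n+1) k x y)
        (((n:ℝ)+1) * ∑ k ∈ range (n+1), abelTerm n k x z) z := by
      intro z
      have hterm : ∀ k ∈ range (n+2), HasDerivAt (fun y => abelTerm (n+1) k x y)
          (((n+1).choose k : ℝ) * (if k = 0 then 1 else x) * (x+k)^(k-1)
            * (((n+1-k : ℕ) : ℝ) * (z-k)^(n-k))) z := by
        intro k hk
        have hk' : k ≤ n+1 := by simpa [Nat.lt_succ_iff] using hk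
        have hp : HasDerivAt (fun y : ℝ => (y - (k:ℝ))^(n+1-k))
            (((n+1-k : ℕ):ℝ) * (z - (k:ℝ))^((n+1-k)-1) * 1) z := by
          exact (hasDerivAt_pow (n+1-k) (z - (k:ℝ))).comp z ((hasDerivAt_id z).sub_const _)
        have hexp : (n+1-k) - 1 = n - k := by omega
        rw [hexp, mul_one] at hp
        have hfun : (fun y : ℝ => abelTerm (n+1) k x y)
            = fun y => (((n+1).choose k : ℝ) * (if k = 0 then 1 else x) * (x+(k:ℝ))^(k-1))
              * (y - (k:ℝ))^(n+1-k) := by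
          funext y; unfold abelTerm; ring
        rw [hfun]
        exact hp.const_mul (((n+1).choose k : ℝ) * (if k = 0 then 1 else x) * (x+(k:ℝ))^(k-1))
      have := HasDerivAt.fun_sum hterm
      refine this.congr_deriv ?_
      symm
      rw [Finset.mul_sum]
      rw [Finset.sum_range_succ _ (n+1)]
      have hz : ((n+1-(n+1) : ℕ) : ℝ) = 0 := by norm_num
      rw [hz]
      simp only [zero_mul, mul_zero, add_zero]
      apply Finset.sum_congr rfl
      intro k hk
      have hk' : k ≤ n := by simpa [Nat.lt_succ_iff] using hk
      have hc : ((n+1).choose k : ℝ) * ((n+1-k : ℕ) : ℝ) = ((n:ℝ)+1) * (n.choose k : ℝ) := by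
        exact_mod_cast choose_mul_sub n k
      unfold abelTerm
      linear_combination (-(if k = 0 then (1:ℝ) else x) * (x+(k:ℝ))^(k-1) * (z-(k:ℝ))^(n-k)) * hc
    -- G has zero derivative
    set G : ℝ → ℝ := fun y => (∑ k ∈ range (n+2), abelTerm (n+1) k x y) - (x+y)^(n+1) with hG
    have hG' : ∀ z : ℝ, HasDerivAt G 0 z := by
      intro z
      have h2 : HasDerivAt (fun y : ℝ => (x+y)^(n+1))
          (((n:ℝ)+1) * (x+z)^n) z := by
        have := (hasDerivAt_pow (n+1) (x+z)).comp z ((hasDerivAt_id z).const_add x)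
        refine this.congr_deriv ?_
        push_cast; ring
      have := (hF z).sub h2
      rw [ih x z] at this
      simp at this
      exact this
    have hconst : G y = G (-x) :=
      is_const_of_deriv_eq_zero (fun z => (hG' z).differentiableAt)
        (fun z => (hG' z).deriv) y (-x)
    have hGnegx : G (-x) = 0 := by
      rw [hG]
      simp only
      rw [abel_eval_neg (n+1) (by omega) x]
      have : (x + -x) = 0 := by ring
      rw [this, zero_pow (by omega)]
      ring
    have := hconst.trans hGnegx
    rw [hG] at this
    simp only at this
    linarith [this]


noncomputable def pc (m : ℕ) : ℝ := ((m:ℝ)+1)^(m-1) / m.factorial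
noncomputable def bc (m : ℕ) : ℝ := ((m:ℝ)+1)^m / m.factorial
noncomputable def ac (m : ℕ) : ℝ := ((m:ℝ)+2)^m / m.factorial

lemma pc_nonneg (m : ℕ) : 0 ≤ pc m := by unfold pc; positivity
lemma bc_nonneg (m : ℕ) : 0 ≤ bc m := by unfold bc; positivity
lemma ac_nonneg (m : ℕ) : 0 ≤ ac m := by unfold ac; positivity

lemma pc_le_bc (m : ℕ) : pc m ≤ bc m := by
  unfold pc bc
  apply div_le_div_of_nonneg_right _ (by positivity)
  · exact pow_le_pow_right₀ (by push_cast; linarith [Nat.cast_nonneg (α := ℝ) m]) (Nat.sub_le m 1)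

lemma bc_le (m : ℕ) : bc m ≤ exp 1 ^ (m+1) := by
  unfold bc
  calc ((m:ℝ)+1)^m / m.factorial ≤ exp ((m:ℝ)+1) :=
        Real.pow_div_factorial_le_exp _ (by positivity) m
    _ = exp 1 ^ (m+1) := by
        rw [← Real.exp_nat_mul]; push_cast; ring_nf

lemma ac_le (m : ℕ) : ac m ≤ exp 1 ^ (m+2) := by
  unfold ac
  calc ((m:ℝ)+2)^m / m.factorial ≤ exp ((m:ℝ)+2) :=
        Real.pow_div_factorial_le_exp _ (by positivity) m
    _ = exp 1 ^ (m+2) := by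
        rw [← Real.exp_nat_mul]; push_cast; ring_nf

lemma factorial_ge (m : ℕ) : Real.sqrt (2*m) * ((m:ℝ)/exp 1)^m ≤ m.factorial := by
  rcases Nat.eq_zero_or_pos m with rfl | hm
  · simp
  · obtain ⟨k, rfl⟩ := Nat.exists_eq_add_of_le hm
    have h1 : (1:ℝ) ≤ Stirling.stirlingSeq (1+k) := by
      have h2 := Stirling.stirlingSeq'_antitone.le_of_tendsto
        (Stirling.tendsto_stirlingSeq_sqrt_pi.comp (tendsto_add_atTop_nat 1)) k
      have h3 : (1:ℝ) ≤ Real.sqrt π := by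
        rw [show (1:ℝ) = Real.sqrt 1 by simp]
        exact Real.sqrt_le_sqrt (by linarith [Real.pi_gt_three])
      calc (1:ℝ) ≤ Real.sqrt π := h3
        _ ≤ (Stirling.stirlingSeq ∘ Nat.succ) k := h2
        _ = Stirling.stirlingSeq (1+k) := by simp [Nat.succ_eq_add_one, Nat.add_comm]
    have hpos : 0 < Real.sqrt (2*(1+k:ℕ)) * (((1+k:ℕ):ℝ)/exp 1)^(1+k) := by
      have : (0:ℝ) < ((1+k:ℕ):ℝ) := by positivity
      positivity
    rw [Stirling.stirlingSeq, le_div_iff₀ hpos] at h1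
    linarith [h1]

-- (1+1/m)^m ≤ e
lemma one_add_inv_pow_le (m : ℕ) (hm : 1 ≤ m) : ((m:ℝ)+1)^m ≤ exp 1 * (m:ℝ)^m := by
  have hmpos : (0:ℝ) < m := by exact_mod_cast hm
  have h1 : ((m:ℝ)+1) ≤ exp (1/(m:ℝ)) * m := by
    have := Real.add_one_le_exp (1/(m:ℝ))
    calc ((m:ℝ)+1) = (1/(m:ℝ) + 1) * m := by field_simp; ring
      _ ≤ exp (1/(m:ℝ)) * m := mul_le_mul_of_nonneg_right this (le_of_lt hmpos)
  calc ((m:ℝ)+1)^m ≤ (exp (1/(m:ℝ)) * m)^m := by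
        apply pow_le_pow_left₀ (by positivity) h1
    _ = exp 1 * (m:ℝ)^m := by
        rw [mul_pow, ← Real.exp_nat_mul]
        congr 2
        field_simp



noncomputable def pf (m : ℕ) (θ : ℝ) : ℝ := pc m * (θ^m * Real.exp (-((m:ℝ)+1)*θ))
noncomputable def bf (m : ℕ) (θ : ℝ) : ℝ := bc m * (θ^m * Real.exp (-((m:ℝ)+1)*θ))
noncomputable def af (m : ℕ) (θ : ℝ) : ℝ := ac m * (θ^m * Real.exp (-((m:ℝ)+2)*θ))

lemma exp_split1 (m : ℕ) (θ : ℝ) :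
    Real.exp (-((m:ℝ)+1)*θ) = (Real.exp (-θ))^m * Real.exp (-θ) := by
  rw [← Real.exp_nat_mul, ← Real.exp_add]
  congr 1; ring

lemma exp_split2 (m : ℕ) (θ : ℝ) :
    Real.exp (-((m:ℝ)+2)*θ) = (Real.exp (-θ))^m * Real.exp (-2*θ) := by
  rw [← Real.exp_nat_mul, ← Real.exp_add]
  congr 1; ring

lemma pf_eq (m : ℕ) (θ : ℝ) : pf m θ = pc m * (θ * Real.exp (-θ))^m * Real.exp (-θ) := by
  unfold pf; rw [exp_split1, mul_pow]; ring

lemma bf_eq (m : ℕ) (θ : ℝ) : bf m θ = bc m * (θ * Real.exp (-θ))^m * Real.exp (-θ) := by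
  unfold bf; rw [exp_split1, mul_pow]; ring

lemma af_eq (m : ℕ) (θ : ℝ) : af m θ = ac m * (θ * Real.exp (-θ))^m * Real.exp (-2*θ) := by
  unfold af; rw [exp_split2, mul_pow]; ring

lemma q_le_inv_e (θ : ℝ) : θ * Real.exp (-θ) ≤ Real.exp (-1) := by
  have h := Real.add_one_le_exp (θ - 1)
  have hexp : Real.exp (θ-1) * Real.exp (-θ) = Real.exp (-1) := by
    rw [← Real.exp_add]; congr 1; ring
  nlinarith [Real.exp_pos (-θ), Real.exp_pos (θ-1)]

lemma q_lt_inv_e (θ : ℝ) (hθ : θ ≠ 1) : θ * Real.exp (-θ) < Real.exp (-1) := by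
  have h := Real.add_one_lt_exp (sub_ne_zero.mpr hθ)
  have hexp : Real.exp (θ-1) * Real.exp (-θ) = Real.exp (-1) := by
    rw [← Real.exp_add]; congr 1; ring
  nlinarith [Real.exp_pos (-θ), Real.exp_pos (θ-1)]

lemma q_mono {a b : ℝ} (ha : 0 ≤ a) (hab : a ≤ b) (hb : b ≤ 1) :
    a * Real.exp (-a) ≤ b * Real.exp (-b) := by
  have h1 : a ≤ b * Real.exp (a-b) := by
    have h := Real.add_one_le_exp (a - b)
    have hbnn : 0 ≤ b := le_trans ha hab
    nlinarith [Real.exp_pos (a-b)]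
  calc a * Real.exp (-a) ≤ (b * Real.exp (a-b)) * Real.exp (-a) := by
        apply mul_le_mul_of_nonneg_right h1 (le_of_lt (Real.exp_pos _))
    _ = b * Real.exp (-b) := by
        rw [mul_assoc, ← Real.exp_add]; congr 2; ring

lemma q_nonneg {θ : ℝ} (hθ : 0 ≤ θ) : 0 ≤ θ * Real.exp (-θ) := by positivity

-- uniform M-test bound for pf on [0,1]
noncomputable def uP (m : ℕ) : ℝ := pc m * (Real.exp (-1))^m

lemma pf_le_uP (m : ℕ) {θ : ℝ} (h0 : 0 ≤ θ) : |pf m θ| ≤ uP m := by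
  rw [pf_eq]
  have h1 : 0 ≤ θ * Real.exp (-θ) := q_nonneg h0
  have h2 : θ * Real.exp (-θ) ≤ Real.exp (-1) := q_le_inv_e θ
  have h3 : Real.exp (-θ) ≤ 1 := Real.exp_le_one_iff.mpr (by linarith)
  have hnn : 0 ≤ pc m * (θ * Real.exp (-θ))^m * Real.exp (-θ) :=
    mul_nonneg (mul_nonneg (pc_nonneg m) (pow_nonneg h1 m)) (Real.exp_pos _).le
  rw [abs_of_nonneg hnn]
  unfold uP
  calc pc m * (θ * Real.exp (-θ))^m * Real.exp (-θ)
      ≤ pc m * (Real.exp (-1))^m * 1 := by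
        apply mul_le_mul _ h3 (le_of_lt (Real.exp_pos _))
          (mul_nonneg (pc_nonneg m) (by positivity))
        exact mul_le_mul_of_nonneg_left (pow_le_pow_left₀ h1 h2 m) (pc_nonneg m)
    _ = pc m * (Real.exp (-1))^m := by ring

lemma uP_bound (m : ℕ) (hm : 1 ≤ m) : uP m ≤ exp 1 / (((m:ℝ)+1) * Real.sqrt ((m:ℝ)+1)) := by
  have hmpos : (0:ℝ) < m := by exact_mod_cast hm
  have hfac : (0:ℝ) < m.factorial := by exact_mod_cast m.factorial_pos
  have hstir := factorial_ge m
  have hsq : (0:ℝ) < Real.sqrt (2*m) := Real.sqrt_pos.mpr (by positivity)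
  have hpow : (0:ℝ) < ((m:ℝ)/exp 1)^m := by positivity
  -- uP m = (m+1)^(m-1) * exp(-1)^m / m!
  have h1 : uP m = ((m:ℝ)+1)^(m-1) * (Real.exp (-1))^m / m.factorial := by
    unfold uP pc; ring
  have hkey : ((m:ℝ)+1)^(m-1) * (Real.exp (-1))^m / m.factorial
      ≤ ((m:ℝ)+1)^(m-1) * (Real.exp (-1))^m / (Real.sqrt (2*m) * ((m:ℝ)/exp 1)^m) := by
    apply div_le_div_of_nonneg_left (by positivity) (by positivity) hstir
  -- simplify the rhs
  have hexp : ((m:ℝ)/exp 1)^m * (Real.exp 1)^m = (m:ℝ)^m := by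
    rw [div_pow]; field_simp
  have hem : (Real.exp (-1))^m = ((Real.exp 1)^m)⁻¹ := by
    rw [← Real.exp_nat_mul, ← Real.exp_nat_mul, ← Real.exp_neg]; congr 1; ring
  have hrhs : ((m:ℝ)+1)^(m-1) * (Real.exp (-1))^m / (Real.sqrt (2*m) * ((m:ℝ)/exp 1)^m)
      = ((m:ℝ)+1)^(m-1) / (Real.sqrt (2*m) * (m:ℝ)^m) := by
    rw [hem, ← hexp]
    have he : (0:ℝ) < (Real.exp 1)^m := by positivity
    field_simp
  -- (m+1)^(m-1) ≤ e * m^m / (m+1)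
  have hm1 : ((m:ℝ)+1)^(m-1) * ((m:ℝ)+1) = ((m:ℝ)+1)^m := by
    rw [← pow_succ]; congr 1; omega
  have hm2 : ((m:ℝ)+1)^m ≤ exp 1 * (m:ℝ)^m := one_add_inv_pow_le m hm
  have hm1r : (1:ℝ) ≤ m := by exact_mod_cast hm
  have hsqle : Real.sqrt ((m:ℝ)+1) ≤ Real.sqrt (2*m) := by
    apply Real.sqrt_le_sqrt; push_cast; linarith
  -- final chain
  rw [h1]
  apply le_trans hkey
  rw [hrhs]
  rw [div_le_div_iff₀ (by positivity) (by positivity)]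
  have hs2 : 0 < Real.sqrt ((m:ℝ)+1) := Real.sqrt_pos.mpr (by positivity)
  calc ((m:ℝ)+1)^(m-1) * (((m:ℝ)+1) * Real.sqrt ((m:ℝ)+1))
      = ((m:ℝ)+1)^m * Real.sqrt ((m:ℝ)+1) := by rw [← hm1]; ring
    _ ≤ (exp 1 * (m:ℝ)^m) * Real.sqrt (2*m) := by
        apply mul_le_mul hm2 hsqle (le_of_lt hs2) (by positivity)
    _ = exp 1 * (Real.sqrt (2*(m:ℕ)) * (m:ℝ)^m) := by push_cast; ring

lemma rpow_32 (x : ℝ) (hx : 0 < x) : x^(-(3/2):ℝ) = 1/(x * Real.sqrt x) := by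
  rw [Real.rpow_neg hx.le, show (3/2:ℝ) = 1 + 1/2 by norm_num, Real.rpow_add hx, Real.rpow_one,
    ← Real.sqrt_eq_rpow]
  field_simp

lemma summable_uP : Summable uP := by
  rw [← summable_nat_add_iff 1]
  have hsum : Summable (fun m : ℕ => exp 1 * ((m:ℝ)+1)^(-(3/2):ℝ)) := by
    apply Summable.mul_left
    have h := (Real.summable_nat_rpow (p := -(3/2))).mpr (by norm_num)
    have h2 := (summable_nat_add_iff (f := fun n:ℕ => (n:ℝ)^(-(3/2):ℝ)) 1).mpr h
    exact h2.congr (fun n => by push_cast; ring_nf)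
  apply Summable.of_nonneg_of_le
    (fun m => mul_nonneg (pc_nonneg _) (by positivity)) (fun m => ?_) hsum
  have hb := uP_bound (m+1) (by omega)
  have h2 : (0:ℝ) < (m:ℝ)+1 := by positivity
  have hr1 : ((m:ℝ)+1)^(-(3/2):ℝ) = 1/(((m:ℝ)+1) * Real.sqrt ((m:ℝ)+1)) := rpow_32 _ h2
  calc uP (m+1) ≤ exp 1 / (((((m+1):ℕ):ℝ)+1) * Real.sqrt ((((m+1):ℕ):ℝ)+1)) := hb
    _ ≤ exp 1 / ((((m:ℝ))+1) * Real.sqrt (((m:ℝ))+1)) := by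
        push_cast
        apply div_le_div_of_nonneg_left (Real.exp_pos 1).le
          (by positivity) ?_
        apply mul_le_mul (by linarith) (Real.sqrt_le_sqrt (by linarith))
          (Real.sqrt_nonneg _) (by positivity)
    _ = exp 1 * ((m:ℝ)+1)^(-(3/2):ℝ) := by rw [hr1]; ring

noncomputable def Pfun (θ : ℝ) : ℝ := ∑' m, pf m θ
noncomputable def Bfun (θ : ℝ) : ℝ := ∑' m, bf m θ
noncomputable def Afun (θ : ℝ) : ℝ := ∑' m, af m θ

lemma summable_abs_pf {θ : ℝ} (h : 0 ≤ θ) : Summable (fun m => |pf m θ|) := by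
  apply Summable.of_nonneg_of_le (fun m => abs_nonneg _) (fun m => pf_le_uP m h) summable_uP

lemma summable_pf {θ : ℝ} (h : 0 ≤ θ) : Summable (fun m => pf m θ) :=
  (summable_abs_pf h).of_abs

noncomputable def rr (b : ℝ) : ℝ := exp 1 * (b * Real.exp (-b))

lemma rr_nonneg {b : ℝ} (hb : 0 ≤ b) : 0 ≤ rr b := by
  unfold rr; positivity

lemma rr_lt_one {b : ℝ} (hb : b < 1) : rr b < 1 := by
  unfold rr
  have h := q_lt_inv_e b (ne_of_lt hb)
  calc exp 1 * (b * Real.exp (-b)) < exp 1 * Real.exp (-1) :=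
        (mul_lt_mul_iff_right₀ (Real.exp_pos 1)).mpr h
    _ = 1 := by rw [← Real.exp_add]; norm_num

lemma bf_le {θ b : ℝ} (h0 : 0 ≤ θ) (hθb : θ ≤ b) (hb : b ≤ 1) (m : ℕ) :
    |bf m θ| ≤ exp 1 * (rr b)^m := by
  rw [bf_eq]
  have h1 : 0 ≤ θ * Real.exp (-θ) := q_nonneg h0
  have h2 : θ * Real.exp (-θ) ≤ b * Real.exp (-b) := q_mono h0 hθb hb
  have h3 : Real.exp (-θ) ≤ 1 := Real.exp_le_one_iff.mpr (by linarith)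
  have hnn : 0 ≤ bc m * (θ * Real.exp (-θ))^m * Real.exp (-θ) :=
    mul_nonneg (mul_nonneg (bc_nonneg m) (pow_nonneg h1 m)) (Real.exp_pos _).le
  rw [abs_of_nonneg hnn]
  calc bc m * (θ * Real.exp (-θ))^m * Real.exp (-θ)
      ≤ (exp 1 ^ (m+1)) * (b * Real.exp (-b))^m * 1 := by
        apply mul_le_mul _ h3 (Real.exp_pos _).le
          (mul_nonneg (by positivity) (pow_nonneg (q_nonneg (le_trans h0 hθb)) m))
        exact mul_le_mul (bc_le m) (pow_le_pow_left₀ h1 h2 m) (pow_nonneg h1 m) (by positivity)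
    _ = exp 1 * (rr b)^m := by unfold rr; rw [mul_pow, pow_succ]; ring

lemma af_le {θ : ℝ} (h0 : 0 ≤ θ) (hθ : θ ≤ 1) (m : ℕ) :
    |af m θ| ≤ (exp 1)^2 * (rr θ)^m := by
  rw [af_eq]
  have h1 : 0 ≤ θ * Real.exp (-θ) := q_nonneg h0
  have h3 : Real.exp (-2*θ) ≤ 1 := Real.exp_le_one_iff.mpr (by linarith)
  have hnn : 0 ≤ ac m * (θ * Real.exp (-θ))^m * Real.exp (-2*θ) :=
    mul_nonneg (mul_nonneg (ac_nonneg m) (pow_nonneg h1 m)) (Real.exp_pos _).le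
  rw [abs_of_nonneg hnn]
  calc ac m * (θ * Real.exp (-θ))^m * Real.exp (-2*θ)
      ≤ (exp 1 ^ (m+2)) * (θ * Real.exp (-θ))^m * 1 := by
        apply mul_le_mul _ h3 (Real.exp_pos _).le (by positivity)
        exact mul_le_mul_of_nonneg_right (ac_le m) (pow_nonneg h1 m)
    _ = (exp 1)^2 * (rr θ)^m := by unfold rr; rw [mul_pow, pow_add]; ring

lemma summable_abs_bf {θ : ℝ} (h0 : 0 ≤ θ) (h1 : θ < 1) : Summable (fun m => |bf m θ|) := by
  apply Summable.of_nonneg_of_le (fun m => abs_nonneg _)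
    (fun m => bf_le h0 le_rfl h1.le m)
  exact (summable_geometric_of_lt_one (rr_nonneg h0) (rr_lt_one h1)).mul_left _

lemma summable_bf {θ : ℝ} (h0 : 0 ≤ θ) (h1 : θ < 1) : Summable (fun m => bf m θ) :=
  (summable_abs_bf h0 h1).of_abs

lemma summable_af {θ : ℝ} (h0 : 0 ≤ θ) (h1 : θ < 1) : Summable (fun m => af m θ) := by
  apply Summable.of_abs
  apply Summable.of_nonneg_of_le (fun m => abs_nonneg _) (fun m => af_le h0 h1.le m)
  exact (summable_geometric_of_lt_one (rr_nonneg h0) (rr_lt_one h1)).mul_left _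

lemma Bfun_nonneg {θ : ℝ} (h0 : 0 ≤ θ) : 0 ≤ Bfun θ := by
  apply tsum_nonneg
  intro m
  rw [bf_eq]
  exact mul_nonneg (mul_nonneg (bc_nonneg m) (pow_nonneg (q_nonneg h0) m)) (Real.exp_pos _).le

lemma Bfun_le {x b : ℝ} (h0 : 0 ≤ x) (hxb : x ≤ b) (hb : b < 1) :
    Bfun x ≤ exp 1 * (1 - rr b)⁻¹ := by
  have hb0 : 0 ≤ b := le_trans h0 hxb
  have hgeo : Summable (fun m : ℕ => exp 1 * (rr b)^m) :=
    (summable_geometric_of_lt_one (rr_nonneg hb0) (rr_lt_one hb)).mul_left _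
  have hle : ∀ m : ℕ, bf m x ≤ exp 1 * (rr b)^m := fun m =>
    le_trans (le_abs_self _) (bf_le h0 hxb hb.le m)
  calc Bfun x ≤ ∑' m, exp 1 * (rr b)^m := by
        apply Summable.tsum_le_tsum hle _ hgeo
        exact Summable.of_abs (Summable.of_nonneg_of_le (fun m => abs_nonneg _)
          (fun m => bf_le h0 hxb hb.le m) hgeo)
    _ = exp 1 * (1 - rr b)⁻¹ := by
        rw [tsum_mul_left, tsum_geometric_of_lt_one (rr_nonneg hb0) (rr_lt_one hb)]

-- coefficient identity
lemma coeff_identity (n : ℕ) : ∑ i ∈ range (n+1), pc i * bc (n-i) = ac n := by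
  have habel := abel_sum n 1 ((n:ℝ)+1)
  have key : ∀ i ∈ range (n+1), pc i * bc (n-i) = abelTerm n i 1 ((n:ℝ)+1) / n.factorial := by
    intro i hi
    have hi' : i ≤ n := Nat.lt_succ_iff.mp (mem_range.mp hi)
    unfold pc bc abelTerm
    have hfact : (n.choose i : ℝ) * i.factorial * (n-i).factorial = n.factorial := by
      exact_mod_cast Nat.choose_mul_factorial_mul_factorial hi'
    set A := (((n - i:ℕ)):ℝ) with hA
    have hcast : ((n:ℝ)+1) - (i:ℝ) = A + 1 := by
      rw [hA]
      have h2 : (((n-i:ℕ)):ℝ) = (n:ℝ) - i := by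
        push_cast [Nat.cast_sub hi']; ring
      rw [h2]; ring
    rw [hcast]
    have hif : (if i = 0 then (1:ℝ) else 1) = 1 := by simp
    rw [hif]
    have hfi : (0:ℝ) < i.factorial := by exact_mod_cast i.factorial_pos
    have hfni : (0:ℝ) < (n-i).factorial := by exact_mod_cast (n-i).factorial_pos
    have hfn : (0:ℝ) < n.factorial := by exact_mod_cast n.factorial_pos
    have h1i : ((i:ℝ)+1) = (1:ℝ)+i := by ring
    rw [h1i]
    field_simp
    linear_combination (-(A+1)^(n-i)) * hfact
  rw [Finset.sum_congr rfl key, ← Finset.sum_div, habel]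
  unfold ac
  congr 1
  push_cast
  ring

lemma cauchy {θ : ℝ} (h0 : 0 ≤ θ) (h1 : θ < 1) : Pfun θ * Bfun θ = Afun θ := by
  unfold Pfun Bfun Afun
  have hf : Summable (fun m => ‖pf m θ‖) := by
    simpa [Real.norm_eq_abs] using summable_abs_pf h0
  have hg : Summable (fun m => ‖bf m θ‖) := by
    simpa [Real.norm_eq_abs] using summable_abs_bf h0 h1
  rw [tsum_mul_tsum_eq_tsum_sum_antidiagonal_of_summable_norm hf hg]
  apply tsum_congr
  intro n
  rw [Finset.Nat.sum_antidiagonal_eq_sum_range_succ_mk]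
  have key : ∀ i ∈ range (n+1), pf i θ * bf (n-i) θ
      = (pc i * bc (n-i)) * (θ^n * Real.exp (-((n:ℝ)+2)*θ)) := by
    intro i hi
    have hi' : i ≤ n := Nat.lt_succ_iff.mp (mem_range.mp hi)
    unfold pf bf
    have hθpow : θ^i * θ^(n-i) = θ^n := by
      rw [← pow_add]; congr 1; omega
    have hexp : Real.exp (-((i:ℝ)+1)*θ) * Real.exp (-(((n-i:ℕ):ℝ))*θ - θ)
        = Real.exp (-((n:ℝ)+2)*θ) := by
      rw [← Real.exp_add]
      congr 1
      have h2 : (((n-i:ℕ)):ℝ) = (n:ℝ) - i := by push_cast [Nat.cast_sub hi']; ring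
      rw [h2]; ring
    have h3 : -((((n-i:ℕ)):ℝ)+1)*θ = -(((n-i:ℕ):ℝ))*θ - θ := by ring
    rw [h3] at *
    calc pc i * (θ^i * Real.exp (-((i:ℝ)+1)*θ)) * (bc (n-i) * (θ^(n-i) * Real.exp (-(((n-i:ℕ):ℝ))*θ - θ)))
        = (pc i * bc (n-i)) * ((θ^i * θ^(n-i)) * (Real.exp (-((i:ℝ)+1)*θ) * Real.exp (-(((n-i:ℕ):ℝ))*θ - θ))) := by ring
      _ = (pc i * bc (n-i)) * (θ^n * Real.exp (-((n:ℝ)+2)*θ)) := by rw [hθpow, hexp]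
  rw [Finset.sum_congr rfl key, ← Finset.sum_mul, coeff_identity]
  unfold af
  ring

noncomputable def pf' (m : ℕ) (θ : ℝ) : ℝ :=
  pc m * ((m:ℝ) * θ^(m-1) * Real.exp (-((m:ℝ)+1)*θ)
    - ((m:ℝ)+1) * θ^m * Real.exp (-((m:ℝ)+1)*θ))

lemma hasDerivAt_pf (m : ℕ) (θ : ℝ) : HasDerivAt (pf m) (pf' m θ) θ := by
  have h1 : HasDerivAt (fun y : ℝ => y^m) ((m:ℝ) * θ^(m-1)) θ := hasDerivAt_pow m θ
  have h2 : HasDerivAt (fun y : ℝ => Real.exp (-((m:ℝ)+1)*y))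
      (Real.exp (-((m:ℝ)+1)*θ) * (-((m:ℝ)+1))) θ :=
    (Real.hasDerivAt_exp _).comp θ (by simpa using (hasDerivAt_id θ).const_mul (-((m:ℝ)+1)))
  have h3 := (h1.mul h2).const_mul (pc m)
  refine h3.congr_deriv ?_
  unfold pf'
  ring

lemma pc_mul (m : ℕ) : pc m * ((m:ℝ)+1) = bc m := by
  unfold pc bc
  have h : ((m:ℝ)+1)^(m-1) * ((m:ℝ)+1) = ((m:ℝ)+1)^m := by
    rcases Nat.eq_zero_or_pos m with rfl | hm
    · norm_num
    · rw [← pow_succ]; congr 1; omega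
  field_simp
  linear_combination h

lemma pc_succ (k : ℕ) : pc (k+1) * ((k:ℝ)+1) = ac k := by
  unfold pc ac
  have hfs : ((k+1).factorial : ℝ) = ((k:ℝ)+1) * k.factorial := by
    rw [Nat.factorial_succ]; push_cast; ring
  have hexp : (k+1) - 1 = k := by omega
  rw [hexp, hfs]
  have hcast : (((k+1:ℕ)):ℝ)+1 = (k:ℝ)+2 := by push_cast; ring
  rw [hcast]
  have hk : (0:ℝ) < (k:ℝ)+1 := by positivity
  have hf : (0:ℝ) < k.factorial := by exact_mod_cast k.factorial_pos
  field_simp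

lemma pf'_eq (m : ℕ) (θ : ℝ) :
    pf' m θ = pc m * (m:ℝ) * θ^(m-1) * Real.exp (-((m:ℝ)+1)*θ) - bf m θ := by
  unfold pf' bf
  rw [← pc_mul m]
  ring

-- derivative bound on Ioo a c
lemma pf'_bound {a c : ℝ} (ha : 0 < a) (hc : c ≤ 1) (m : ℕ) {x : ℝ}
    (hx : x ∈ Set.Ioo a c) :
    |pf' m x| ≤ exp 1 * ((m:ℝ)/a + ((m:ℝ)+1)) * (rr c)^m := by
  obtain ⟨hxa, hxc⟩ := hx
  have hx0 : 0 < x := lt_trans ha hxa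
  have hq0 : 0 ≤ x * Real.exp (-x) := q_nonneg hx0.le
  have hqc : x * Real.exp (-x) ≤ c * Real.exp (-c) := q_mono hx0.le hxc.le hc
  have hqcpow : (x * Real.exp (-x))^m ≤ (c * Real.exp (-c))^m := pow_le_pow_left₀ hq0 hqc m
  have hxm : x^m * Real.exp (-((m:ℝ)+1)*x) ≤ (c * Real.exp (-c))^m := by
    have := exp_split1 m x
    calc x^m * Real.exp (-((m:ℝ)+1)*x) = (x * Real.exp (-x))^m * Real.exp (-x) := by
          rw [this, mul_pow]; ring
      _ ≤ (c * Real.exp (-c))^m * 1 := by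
          apply mul_le_mul hqcpow (Real.exp_le_one_iff.mpr (by linarith)) (Real.exp_pos _).le
            (pow_nonneg (q_nonneg (by linarith)) m)
      _ = (c * Real.exp (-c))^m := by ring
  have hxm1 : (m:ℝ) * x^(m-1) * Real.exp (-((m:ℝ)+1)*x) ≤ ((m:ℝ)/a) * (c * Real.exp (-c))^m := by
    rcases Nat.eq_zero_or_pos m with rfl | hm
    · simp
    · have hpow : x^(m-1) = x^m / x := by
        rw [eq_div_iff hx0.ne', ← pow_succ]; congr 1; omega
      rw [hpow]
      have h1 : (m:ℝ) * (x^m / x) * Real.exp (-((m:ℝ)+1)*x)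
          = ((m:ℝ)/x) * (x^m * Real.exp (-((m:ℝ)+1)*x)) := by ring
      rw [h1]
      apply mul_le_mul _ hxm (by positivity) (by positivity)
      apply div_le_div_of_nonneg_left (Nat.cast_nonneg m) ha hxa.le
  have hpcle : pc m ≤ exp 1 ^ (m+1) := le_trans (pc_le_bc m) (bc_le m)
  have hpc0 : 0 ≤ pc m := pc_nonneg m
  have habs : |pf' m x| ≤ pc m * ((m:ℝ) * x^(m-1) * Real.exp (-((m:ℝ)+1)*x)
      + ((m:ℝ)+1) * x^m * Real.exp (-((m:ℝ)+1)*x)) := by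
    unfold pf'
    rw [abs_mul, abs_of_nonneg hpc0]
    apply mul_le_mul_of_nonneg_left _ hpc0
    have h1 : (0:ℝ) ≤ (m:ℝ) * x^(m-1) * Real.exp (-((m:ℝ)+1)*x) := by positivity
    have h2 : (0:ℝ) ≤ ((m:ℝ)+1) * x^m * Real.exp (-((m:ℝ)+1)*x) := by positivity
    calc |(m:ℝ) * x^(m-1) * Real.exp (-((m:ℝ)+1)*x) - ((m:ℝ)+1) * x^m * Real.exp (-((m:ℝ)+1)*x)|
        ≤ _ := abs_sub _ _
      _ = (m:ℝ) * x^(m-1) * Real.exp (-((m:ℝ)+1)*x) + ((m:ℝ)+1) * x^m * Real.exp (-((m:ℝ)+1)*x) := by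
          rw [abs_of_nonneg h1, abs_of_nonneg h2]
  calc |pf' m x| ≤ pc m * ((m:ℝ) * x^(m-1) * Real.exp (-((m:ℝ)+1)*x)
        + ((m:ℝ)+1) * x^m * Real.exp (-((m:ℝ)+1)*x)) := habs
    _ ≤ exp 1 ^ (m+1) * (((m:ℝ)/a) * (c * Real.exp (-c))^m
        + ((m:ℝ)+1) * (c * Real.exp (-c))^m) := by
        apply mul_le_mul hpcle _ _ (by positivity)
        · apply add_le_add hxm1
          calc ((m:ℝ)+1) * x^m * Real.exp (-((m:ℝ)+1)*x)
              = ((m:ℝ)+1) * (x^m * Real.exp (-((m:ℝ)+1)*x)) := by ring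
            _ ≤ ((m:ℝ)+1) * (c * Real.exp (-c))^m :=
              mul_le_mul_of_nonneg_left hxm (by positivity)
        · have h1 : (0:ℝ) ≤ (m:ℝ) * x^(m-1) * Real.exp (-((m:ℝ)+1)*x) := by positivity
          have h2 : (0:ℝ) ≤ ((m:ℝ)+1) * x^m * Real.exp (-((m:ℝ)+1)*x) := by positivity
          linarith
    _ = exp 1 * ((m:ℝ)/a + ((m:ℝ)+1)) * (rr c)^m := by
        unfold rr
        rw [mul_pow, pow_succ]
        ring

lemma summable_uD {a c : ℝ} (ha : 0 < a) (h0c : 0 ≤ c) (hc : c < 1) :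
    Summable (fun m : ℕ => exp 1 * ((m:ℝ)/a + ((m:ℝ)+1)) * (rr c)^m) := by
  have hr0 : 0 ≤ rr c := rr_nonneg h0c
  have hr1 : rr c < 1 := rr_lt_one hc
  have hnorm : ‖rr c‖ < 1 := by rw [Real.norm_eq_abs, abs_of_nonneg hr0]; exact hr1
  have h1 : Summable (fun m : ℕ => (m:ℝ) * (rr c)^m) := by
    have := summable_pow_mul_geometric_of_norm_lt_one 1 hnorm (R := ℝ)
    simpa using this
  have h2 : Summable (fun m : ℕ => (rr c)^m) := summable_geometric_of_lt_one hr0 hr1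
  have h3 : Summable (fun m : ℕ => (exp 1 / a) * ((m:ℝ) * (rr c)^m)
      + (exp 1 * ((m:ℝ) * (rr c)^m) + exp 1 * (rr c)^m)) :=
    (h1.mul_left _).add ((h1.mul_left _).add (h2.mul_left _))
  apply h3.congr
  intro m
  field_simp

lemma hasDerivAt_Pfun {θ : ℝ} (h0 : 0 < θ) (h1 : θ < 1) :
    HasDerivAt Pfun (Afun θ - Bfun θ) θ := by
  set a := θ/2 with hadef
  set c := (θ+1)/2 with hcdef
  have ha : 0 < a := by rw [hadef]; linarith
  have hc1 : c < 1 := by rw [hcdef]; linarith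
  have hc0 : 0 ≤ c := by rw [hcdef]; linarith
  have hmem : θ ∈ Set.Ioo a c := by
    constructor <;> [skip; skip] <;> simp [hadef, hcdef] <;> linarith
  have key : HasDerivAt (fun z => ∑' m, pf m z) (∑' m, pf' m θ) θ := by
    apply hasDerivAt_tsum_of_isPreconnected (summable_uD ha hc0 hc1) isOpen_Ioo
      (convex_Ioo a c).isPreconnected (fun m y _ => hasDerivAt_pf m y)
      (fun m y hy => ?_) hmem (summable_pf (by linarith : (0:ℝ) ≤ θ)) hmem
    rw [Real.norm_eq_abs]
    exact pf'_bound ha hc1.le m hy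
  have hsum_pf' : Summable (fun m => pf' m θ) := by
    apply Summable.of_norm_bounded (summable_uD ha hc0 hc1)
    intro m
    rw [Real.norm_eq_abs]
    exact pf'_bound ha hc1.le m hmem
  have hsum_bf : Summable (fun m => bf m θ) := summable_bf (by linarith) h1
  have hs1 : Summable (fun m => pc m * (m:ℝ) * θ^(m-1) * Real.exp (-((m:ℝ)+1)*θ)) := by
    have : (fun m => pc m * (m:ℝ) * θ^(m-1) * Real.exp (-((m:ℝ)+1)*θ))
        = fun m => pf' m θ + bf m θ := by
      funext m; rw [pf'_eq]; ring
    rw [this]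
    exact hsum_pf'.add hsum_bf
  have hts : ∑' m, pf' m θ = (∑' m, pc m * (m:ℝ) * θ^(m-1) * Real.exp (-((m:ℝ)+1)*θ)) - Bfun θ := by
    unfold Bfun
    rw [← Summable.tsum_sub hs1 hsum_bf]
    apply tsum_congr
    intro m
    rw [pf'_eq]
  have hshift : ∑' m, pc m * (m:ℝ) * θ^(m-1) * Real.exp (-((m:ℝ)+1)*θ) = Afun θ := by
    rw [Summable.tsum_eq_zero_add hs1]
    have hz : pc 0 * ((0:ℕ):ℝ) * θ^(0-1) * Real.exp (-(((0:ℕ):ℝ)+1)*θ) = 0 := by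
      norm_num
    rw [hz, zero_add]
    unfold Afun
    apply tsum_congr
    intro k
    unfold af
    have h1 : pc (k+1) * (((k+1:ℕ)):ℝ) = ac k := by
      push_cast
      exact_mod_cast pc_succ k
    have h2 : (k+1) - 1 = k := by omega
    have h3 : -((((k+1:ℕ)):ℝ)+1)*θ = -((k:ℝ)+2)*θ := by push_cast; ring
    rw [h2, h3]
    calc pc (k+1) * (((k+1:ℕ)):ℝ) * θ^k * Real.exp (-((k:ℝ)+2)*θ)
        = (pc (k+1) * (((k+1:ℕ)):ℝ)) * (θ^k * Real.exp (-((k:ℝ)+2)*θ)) := by ring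
      _ = ac k * (θ^k * Real.exp (-((k:ℝ)+2)*θ)) := by rw [h1]
  have : HasDerivAt Pfun (∑' m, pf' m θ) θ := key
  rw [hts, hshift] at this
  exact this

lemma continuousOn_Pfun : ContinuousOn Pfun (Set.Icc 0 1) := by
  apply continuousOn_tsum (u := uP)
  · intro m
    apply Continuous.continuousOn
    unfold pf
    continuity
  · exact summable_uP
  · intro m x hx
    rw [Real.norm_eq_abs]
    exact pf_le_uP m hx.1

lemma Pfun_zero : Pfun 0 = 1 := by
  unfold Pfun
  rw [tsum_eq_single 0]
  · unfold pf pc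
    norm_num
  · intro m hm
    unfold pf
    rw [zero_pow hm]
    ring

lemma Pfun_eq_one_Ico : ∀ b ∈ Set.Ico (0:ℝ) 1, Pfun b = 1 := by
  intro b hb
  obtain ⟨hb0, hb1⟩ := hb
  rcases eq_or_lt_of_le hb0 with rfl | hb0
  · exact Pfun_zero
  -- Gronwall on [a, b] for every 0 < a ≤ b
  set K := exp 1 * (1 - rr b)⁻¹ with hK
  set f := fun x => Pfun x - 1 with hf
  have hcont : ContinuousOn f (Set.Icc 0 1) := continuousOn_Pfun.sub continuousOn_const
  have hgron : ∀ a ∈ Set.Ioc (0:ℝ) b, ‖f b‖ ≤ ‖f a‖ * Real.exp (K * (b - a)) := by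
    intro a ⟨ha0, hab⟩
    have hsub : Set.Icc a b ⊆ Set.Icc 0 1 := Set.Icc_subset_Icc (le_of_lt ha0) (le_of_lt hb1)
    have hder : ∀ x ∈ Set.Ico a b, HasDerivWithinAt f (Bfun x * f x) (Set.Ici x) x := by
      intro x ⟨hxa, hxb⟩
      have hx0 : 0 < x := lt_of_lt_of_le ha0 hxa
      have hx1 : x < 1 := lt_trans hxb hb1
      have hP := hasDerivAt_Pfun hx0 hx1
      have hPB : Afun x - Bfun x = Bfun x * f x := by
        rw [← cauchy hx0.le hx1, hf]
        ring
      rw [hPB] at hP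
      exact (hP.sub_const 1).hasDerivWithinAt
    have hbound : ∀ x ∈ Set.Ico a b, ‖Bfun x * f x‖ ≤ K * ‖f x‖ + 0 := by
      intro x ⟨hxa, hxb⟩
      have hx0 : 0 ≤ x := le_of_lt (lt_of_lt_of_le ha0 hxa)
      rw [add_zero, Real.norm_eq_abs, Real.norm_eq_abs, abs_mul,
        abs_of_nonneg (Bfun_nonneg hx0)]
      apply mul_le_mul_of_nonneg_right _ (abs_nonneg _)
      rw [hK]
      exact Bfun_le hx0 hxb.le hb1
    have := norm_le_gronwallBound_of_norm_deriv_right_le (hcont.mono hsub) hder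
      (le_refl ‖f a‖) hbound b (Set.right_mem_Icc.mpr hab)
    rwa [gronwallBound_ε0] at this
  -- limit a → 0+
  have hL : Filter.NeBot (nhdsWithin (0:ℝ) (Set.Ioc 0 b)) := by
    apply mem_closure_iff_nhdsWithin_neBot.mp
    rw [closure_Ioc (ne_of_lt hb0)]
    exact ⟨le_refl 0, hb0.le⟩
  have hfc : Filter.Tendsto f (nhdsWithin (0:ℝ) (Set.Ioc 0 b)) (nhds (f 0)) := by
    apply Filter.Tendsto.mono_left (hcont.continuousWithinAt ⟨le_refl 0, by norm_num⟩)
    apply nhdsWithin_mono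
    intro x ⟨h1, h2⟩
    exact ⟨h1.le, le_trans h2 hb1.le⟩
  have hec : Filter.Tendsto (fun a => Real.exp (K * (b - a)))
      (nhdsWithin (0:ℝ) (Set.Ioc 0 b)) (nhds (Real.exp (K * b))) := by
    have hcont2 : Continuous (fun a : ℝ => Real.exp (K * (b - a))) := by continuity
    have := hcont2.tendsto 0
    simp only [sub_zero] at this
    exact this.mono_left nhdsWithin_le_nhds
  have hlim : Filter.Tendsto (fun a => ‖f a‖ * Real.exp (K * (b - a)))
      (nhdsWithin (0:ℝ) (Set.Ioc 0 b)) (nhds 0) := by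
    have h0 : ‖f 0‖ = 0 := by
      rw [hf]; simp [Pfun_zero]
    have := (hfc.norm.mul hec)
    rwa [h0, zero_mul] at this
  have hev : ∀ᶠ a in nhdsWithin (0:ℝ) (Set.Ioc 0 b), ‖f b‖ ≤ ‖f a‖ * Real.exp (K * (b - a)) := by
    filter_upwards [self_mem_nhdsWithin] with a ha
    exact hgron a ha
  have hfb : ‖f b‖ ≤ 0 := ge_of_tendsto hlim hev
  have : f b = 0 := norm_le_zero_iff.mp hfb
  rw [hf] at this
  simp only at this
  linarith

lemma Pfun_one : Pfun 1 = 1 := by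
  have hL : Filter.NeBot (nhdsWithin (1:ℝ) (Set.Ico 0 1)) := by
    apply mem_closure_iff_nhdsWithin_neBot.mp
    rw [closure_Ico (by norm_num : (0:ℝ) ≠ 1)]
    exact ⟨by norm_num, le_refl 1⟩
  have h1 : Filter.Tendsto Pfun (nhdsWithin (1:ℝ) (Set.Ico 0 1)) (nhds (Pfun 1)) := by
    apply Filter.Tendsto.mono_left (continuousOn_Pfun.continuousWithinAt ⟨by norm_num, le_refl 1⟩)
    apply nhdsWithin_mono
    intro x ⟨ha, hb⟩
    exact ⟨ha, hb.le⟩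
  have h2 : Filter.Tendsto Pfun (nhdsWithin (1:ℝ) (Set.Ico 0 1)) (nhds 1) := by
    apply Filter.Tendsto.congr' _ tendsto_const_nhds
    filter_upwards [self_mem_nhdsWithin] with x hx
    exact (Pfun_eq_one_Ico x hx).symm
  exact tendsto_nhds_unique h1 h2

lemma Pfun_eq_one {θ : ℝ} (h0 : 0 < θ) (h1 : θ ≤ 1) : Pfun θ = 1 := by
  rcases eq_or_lt_of_le h1 with rfl | h1'
  · exact Pfun_one
  · exact Pfun_eq_one_Ico θ ⟨h0.le, h1'⟩

lemma stmt_term_eq (m : ℕ) (θ : ℝ) :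
    ((m : ℝ) + 1) ^ ((m : ℤ) - 1) * θ ^ m * Real.exp (-((m : ℝ) + 1) * θ) / m.factorial
      = pf m θ := by
  have hz : ((m:ℝ)+1) ^ ((m:ℤ) - 1) = ((m:ℝ)+1) ^ ((m-1 : ℕ)) := by
    cases m with
    | zero => norm_num
    | succ k =>
      have h1 : ((k+1 : ℕ):ℤ) - 1 = (k:ℤ) := by push_cast; ring
      have h2 : (k+1) - 1 = k := by omega
      rw [h1, h2, zpow_natCast]
  rw [hz]
  unfold pf pc
  ring


theorem stmt_6 (θ : ℝ) (hθ0 : 0 < θ) (hθ1 : θ ≤ 1) :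
    ∑' m : ℕ, ((m : ℝ) + 1) ^ ((m : ℤ) - 1) * θ ^ m *
      Real.exp (-((m : ℝ) + 1) * θ) / m.factorial = 1 := by
  have : ∑' m : ℕ, ((m : ℝ) + 1) ^ ((m : ℤ) - 1) * θ ^ m *
      Real.exp (-((m : ℝ) + 1) * θ) / m.factorial = Pfun θ := by
    unfold Pfun
    exact tsum_congr (fun m => stmt_term_eq m θ)
  rw [this]
  exact Pfun_eq_one hθ0 hθ1
end

section
/- Let T be a nonnegative random variable with E[e^{-λT}] = c_λ/b_λ for all λ > 0, where b_λ, c_λ are as in the drawdown setting for a drifted Brownian motion with μ ≠ 0. Then E[T] = (σ²e^{2μa/σ²} − σ² − 2μa)/(2μ²), obtained as −d/dλ (c_λ/b_λ) at λ = 0+. -/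
open Real Filter MeasureTheory

noncomputable def Dfun (μ σ a s : ℝ) : ℝ :=
  (s - μ) * Real.exp ((μ + s) * a / σ ^ 2) + (s + μ) * Real.exp ((μ - s) * a / σ ^ 2)

noncomputable def Ffun (μ σ a lam : ℝ) : ℝ :=
  2 * Real.sqrt (μ ^ 2 + 2 * lam * σ ^ 2) / Dfun μ σ a (Real.sqrt (μ ^ 2 + 2 * lam * σ ^ 2))

lemma Dfun_at (μ σ a : ℝ) (hμ : μ ≠ 0) :
    Dfun μ σ a (Real.sqrt (μ ^ 2)) = 2 * Real.sqrt (μ ^ 2) := by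
  rcases hμ.lt_or_gt with h | h
  · rw [Real.sqrt_sq_eq_abs, abs_of_neg h]
    unfold Dfun
    rw [show (μ + -μ) * a / σ ^ 2 = 0 by ring]
    simp only [Real.exp_zero, mul_one]
    rw [show (-μ + μ) = 0 by ring]
    ring
  · rw [Real.sqrt_sq_eq_abs, abs_of_pos h]
    unfold Dfun
    rw [show (μ - μ) * a / σ ^ 2 = 0 by ring]
    simp only [Real.exp_zero, mul_one]
    ring

lemma Ffun_zero (μ σ a : ℝ) (hμ : μ ≠ 0) : Ffun μ σ a 0 = 1 := by
  unfold Ffun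
  rw [show μ ^ 2 + 2 * (0:ℝ) * σ ^ 2 = μ ^ 2 by ring, Dfun_at μ σ a hμ]
  have h : Real.sqrt (μ ^ 2) ≠ 0 := by
    have : 0 < Real.sqrt (μ ^ 2) := Real.sqrt_pos.2 (by positivity)
    exact ne_of_gt this
  rw [div_self (by simpa using mul_ne_zero two_ne_zero h)]

lemma hasDerivAt_Ffun (μ σ a : ℝ) (hμ : μ ≠ 0) (hσ : 0 < σ) :
    HasDerivAt (Ffun μ σ a)
      (-((σ ^ 2 * Real.exp (2 * μ * a / σ ^ 2) - σ ^ 2 - 2 * μ * a) / (2 * μ ^ 2))) 0 := by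
  have hσ2 : (0:ℝ) < σ ^ 2 := by positivity
  set t := Real.sqrt (μ ^ 2) with ht
  have ht2 : t ^ 2 = μ ^ 2 := Real.sq_sqrt (sq_nonneg μ)
  have htpos : 0 < t := Real.sqrt_pos.2 (by positivity)
  have ht0 : t ≠ 0 := ne_of_gt htpos
  have h0eq : μ ^ 2 + 2 * (0:ℝ) * σ ^ 2 = μ ^ 2 := by ring
  have hu : HasDerivAt (fun x : ℝ => μ ^ 2 + 2 * x * σ ^ 2) (2 * σ ^ 2) 0 := by
    simpa using (((hasDerivAt_id (0:ℝ)).const_mul 2).mul_const (σ ^ 2)).const_add (μ ^ 2)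
  have hsq : HasDerivAt Real.sqrt (1 / (2 * t)) (μ ^ 2 + 2 * (0:ℝ) * σ ^ 2) := by
    rw [h0eq]; exact Real.hasDerivAt_sqrt (by positivity)
  have hs : HasDerivAt (fun lam : ℝ => Real.sqrt (μ ^ 2 + 2 * lam * σ ^ 2)) (σ ^ 2 / t) 0 := by
    have h2 := hsq.comp (0:ℝ) hu
    rw [show σ ^ 2 / t = (1 / (2 * t)) * (2 * σ ^ 2) by field_simp]
    simpa [Function.comp_def] using h2
  have hA : HasDerivAt (fun s : ℝ => (μ + s) * a / σ ^ 2) (a / σ ^ 2) t := by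
    simpa using (((hasDerivAt_id t).const_add μ).mul_const a).div_const (σ ^ 2)
  have hB : HasDerivAt (fun s : ℝ => (μ - s) * a / σ ^ 2) (-(a / σ ^ 2)) t := by
    have := (((hasDerivAt_id t).const_sub μ).mul_const a).div_const (σ ^ 2)
    simpa [neg_div] using this
  have hAe := hA.exp
  have hBe := hB.exp
  set A := Real.exp ((μ + t) * a / σ ^ 2) with hAdef
  set B := Real.exp ((μ - t) * a / σ ^ 2) with hBdef
  have hD : HasDerivAt (fun s => Dfun μ σ a s)
      (1 * A + (t - μ) * (A * (a / σ ^ 2)) + (1 * B + (t + μ) * (B * (-(a / σ ^ 2))))) t :=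
    (((hasDerivAt_id t).sub_const μ).mul hAe).add (((hasDerivAt_id t).add_const μ).mul hBe)
  set dD := 1 * A + (t - μ) * (A * (a / σ ^ 2)) + (1 * B + (t + μ) * (B * (-(a / σ ^ 2)))) with hdDdef
  have hDt : Real.sqrt (μ ^ 2 + 2 * (0:ℝ) * σ ^ 2) = t := by rw [h0eq]
  have hD' : HasDerivAt (fun s => Dfun μ σ a s) dD (Real.sqrt (μ ^ 2 + 2 * (0:ℝ) * σ ^ 2)) := by
    rw [hDt]; exact hD
  have hDcomp : HasDerivAt (fun lam : ℝ => Dfun μ σ a (Real.sqrt (μ ^ 2 + 2 * lam * σ ^ 2)))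
      (dD * (σ ^ 2 / t)) 0 := by
    simpa [Function.comp_def] using hD'.comp (0:ℝ) hs
  have hnum : HasDerivAt (fun lam : ℝ => 2 * Real.sqrt (μ ^ 2 + 2 * lam * σ ^ 2))
      (2 * (σ ^ 2 / t)) 0 := hs.const_mul 2
  have hDval : Dfun μ σ a t = 2 * t := Dfun_at μ σ a hμ
  have hDne : Dfun μ σ a (Real.sqrt (μ ^ 2 + 2 * (0:ℝ) * σ ^ 2)) ≠ 0 := by
    rw [hDt, hDval]; positivity
  have hdD : dD = Real.exp (2 * μ * a / σ ^ 2) + 1 - 2 * μ * a / σ ^ 2 := by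
    rcases hμ.lt_or_gt with h | h
    · have htv : t = -μ := by rw [ht, Real.sqrt_sq_eq_abs, abs_of_neg h]
      rw [hdDdef, hAdef, hBdef, htv]
      rw [show (μ + -μ) * a / σ ^ 2 = 0 by ring,
        show (μ - -μ) * a / σ ^ 2 = 2 * μ * a / σ ^ 2 by ring]
      simp only [Real.exp_zero]
      ring
    · have htv : t = μ := by rw [ht, Real.sqrt_sq_eq_abs, abs_of_pos h]
      rw [hdDdef, hAdef, hBdef, htv]
      rw [show (μ + μ) * a / σ ^ 2 = 2 * μ * a / σ ^ 2 by ring,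
        show (μ - μ) * a / σ ^ 2 = 0 by ring]
      simp only [Real.exp_zero]
      ring
  have hdiv := hnum.div hDcomp hDne
  have hfun : ((fun lam : ℝ => 2 * Real.sqrt (μ ^ 2 + 2 * lam * σ ^ 2)) /
      (fun lam : ℝ => Dfun μ σ a (Real.sqrt (μ ^ 2 + 2 * lam * σ ^ 2)))) = Ffun μ σ a := rfl
  rw [hfun] at hdiv
  refine hdiv.congr_deriv (Eq.symm ?_)
  rw [hDt, hDval, hdD]
  rw [← ht2]
  field_simp
  ring

lemma Ffun_tendsto (μ σ a : ℝ) (hμ : μ ≠ 0) (hσ : 0 < σ) :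
    Tendsto (fun lam => (1 - Ffun μ σ a lam) / lam) (nhdsWithin 0 (Set.Ioi 0))
      (nhds ((σ ^ 2 * Real.exp (2 * μ * a / σ ^ 2) - σ ^ 2 - 2 * μ * a) / (2 * μ ^ 2))) := by
  have hF := hasDerivAt_Ffun μ σ a hμ hσ
  have hsub : Set.Ioi (0:ℝ) ⊆ {(0:ℝ)}ᶜ := fun x hx =>
    Set.mem_compl_singleton_iff.2 (ne_of_gt hx)
  have h := ((hasDerivAt_iff_tendsto_slope.1 hF).mono_left (nhdsWithin_mono 0 hsub)).neg
  refine Tendsto.congr' ?_ (by simpa using h)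
  filter_upwards [self_mem_nhdsWithin] with x hx
  rw [slope_def_field, Ffun_zero μ σ a hμ, sub_zero, ← neg_div, neg_sub]

lemma slope_anti (t : ℝ) {x y : ℝ} (hx : 0 < x) (hxy : x ≤ y) :
    (1 - Real.exp (-y * t)) / y ≤ (1 - Real.exp (-x * t)) / x := by
  have hconv : ConvexOn ℝ Set.univ (fun u : ℝ => Real.exp (-(t * u))) := by
    have h := convexOn_exp.comp_affineMap
      (LinearMap.toAffineMap ((-t) • (LinearMap.id : ℝ →ₗ[ℝ] ℝ)))
    convert h using 1
    case e'_4 => rfl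
    case e'_5 => rfl
    case e'_6 => rfl
    case e'_9 => rfl
    case e'_11 => rfl
    case e'_12 => funext u; show _ = Real.exp (-t * u); ring_nf
  have hy : 0 < y := lt_of_lt_of_le hx hxy
  have h := hconv.secant_mono (Set.mem_univ 0) (Set.mem_univ x) (Set.mem_univ y)
    (ne_of_gt hx) (ne_of_gt hy) hxy
  simp only [mul_zero, neg_zero, Real.exp_zero, sub_zero] at h
  rw [show -y * t = -(t * y) by ring, show -x * t = -(t * x) by ring]
  rw [div_le_div_iff₀ hx hy] at h
  rw [div_le_div_iff₀ hy hx]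
  nlinarith

lemma tendsto_one_sub_exp (t : ℝ) :
    Tendsto (fun x : ℝ => (1 - Real.exp (-x * t)) / x) (nhdsWithin 0 {(0:ℝ)}ᶜ) (nhds t) := by
  have hd : HasDerivAt (fun x : ℝ => Real.exp (-x * t)) (-t) 0 := by
    have h1 : HasDerivAt (fun x : ℝ => -x * t) (-t) 0 := by
      simpa using ((hasDerivAt_id (0:ℝ)).neg).mul_const t
    simpa using h1.exp
  have h := (hasDerivAt_iff_tendsto_slope.1 hd).neg
  refine Tendsto.congr' ?_ (by simpa using h)
  filter_upwards [self_mem_nhdsWithin] with x hx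
  rw [slope_def_field, sub_zero, zero_mul, neg_zero, Real.exp_zero, neg_mul, ← neg_div, neg_sub]

lemma cb_eq (μ σ a : ℝ) (hμ : μ ≠ 0) (hσ : 0 < σ) (ha : 0 < a)
    (βp βm b c : ℝ → ℝ)
    (hβp : ∀ lam, βp lam = (-μ + Real.sqrt (μ ^ 2 + 2 * lam * σ ^ 2)) / σ ^ 2)
    (hβm : ∀ lam, βm lam = (-μ - Real.sqrt (μ ^ 2 + 2 * lam * σ ^ 2)) / σ ^ 2)
    (hb : ∀ lam, b lam = (βp lam * Real.exp (-(βm lam) * a) - βm lam * Real.exp (-(βp lam) * a)) /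
      (Real.exp (-(βm lam) * a) - Real.exp (-(βp lam) * a)))
    (hc : ∀ lam, c lam = (βp lam - βm lam) /
      (Real.exp (-(βm lam) * a) - Real.exp (-(βp lam) * a)))
    (lam : ℝ) (hlam : 0 < lam) : c lam / b lam = Ffun μ σ a lam := by
  have hσ2 : (0:ℝ) < σ ^ 2 := by positivity
  set s := Real.sqrt (μ ^ 2 + 2 * lam * σ ^ 2) with hs
  have hspos : 0 < s := Real.sqrt_pos.2 (by positivity)
  have e1 : -(βm lam) * a = (μ + s) * a / σ ^ 2 := by rw [hβm]; ring
  have e2 : -(βp lam) * a = (μ - s) * a / σ ^ 2 := by rw [hβp]; ring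
  have hEne : Real.exp ((μ + s) * a / σ ^ 2) - Real.exp ((μ - s) * a / σ ^ 2) ≠ 0 := by
    refine sub_ne_zero.2 ?_
    rw [Ne, Real.exp_eq_exp]
    intro h
    have h1 : (μ - s) * a < (μ + s) * a := by nlinarith
    have h2 : (μ - s) * a / σ ^ 2 < (μ + s) * a / σ ^ 2 := (div_lt_div_iff_of_pos_right hσ2).2 h1
    exact absurd h (ne_of_gt h2)
  have cancel : ∀ x y E : ℝ, E ≠ 0 → (x / E) / (y / E) = x / y := by
    intro x y E hE
    rcases eq_or_ne y 0 with rfl | hy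
    · simp
    · field_simp
  rw [hc, hb, e1, e2, hβp, hβm, cancel _ _ _ hEne]
  unfold Ffun Dfun
  rw [← hs]
  have n1 : (-μ + s) / σ ^ 2 - (-μ - s) / σ ^ 2 = (2 * s) / σ ^ 2 := by field_simp; ring
  have n2 : (-μ + s) / σ ^ 2 * Real.exp ((μ + s) * a / σ ^ 2) -
      (-μ - s) / σ ^ 2 * Real.exp ((μ - s) * a / σ ^ 2)
      = ((s - μ) * Real.exp ((μ + s) * a / σ ^ 2) +
        (s + μ) * Real.exp ((μ - s) * a / σ ^ 2)) / σ ^ 2 := by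
    field_simp; ring
  rw [n1, n2, cancel _ _ _ (ne_of_gt hσ2)]

theorem stmt_10 {Ω : Type*} [MeasureSpace Ω] (P : MeasureTheory.Measure Ω)
    [MeasureTheory.IsProbabilityMeasure P]
    (μ σ a : ℝ) (hμ : μ ≠ 0) (hσ : 0 < σ) (ha : 0 < a)
    (βp βm b c : ℝ → ℝ)
    (hβp : ∀ lam, βp lam = (-μ + Real.sqrt (μ ^ 2 + 2 * lam * σ ^ 2)) / σ ^ 2)
    (hβm : ∀ lam, βm lam = (-μ - Real.sqrt (μ ^ 2 + 2 * lam * σ ^ 2)) / σ ^ 2)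
    (hb : ∀ lam, b lam = (βp lam * Real.exp (-(βm lam) * a) - βm lam * Real.exp (-(βp lam) * a)) /
      (Real.exp (-(βm lam) * a) - Real.exp (-(βp lam) * a)))
    (hc : ∀ lam, c lam = (βp lam - βm lam) /
      (Real.exp (-(βm lam) * a) - Real.exp (-(βp lam) * a)))
    (T : Ω → ℝ) (hTmeas : Measurable T) (hTnn : ∀ ω, 0 ≤ T ω)
    (hLT : ∀ lam > 0, ∫ ω, Real.exp (-lam * T ω) ∂P = c lam / b lam) :
    (∫ ω, T ω ∂P = (σ ^ 2 * Real.exp (2 * μ * a / σ ^ 2) - σ ^ 2 - 2 * μ * a) / (2 * μ ^ 2)) ∧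
    Tendsto (fun lam => (1 - c lam / b lam) / lam) (nhdsWithin 0 (Set.Ioi 0))
      (nhds ((σ ^ 2 * Real.exp (2 * μ * a / σ ^ 2) - σ ^ 2 - 2 * μ * a) / (2 * μ ^ 2))) := by
  set L := (σ ^ 2 * Real.exp (2 * μ * a / σ ^ 2) - σ ^ 2 - 2 * μ * a) / (2 * μ ^ 2) with hL
  have hcbF : ∀ lam > 0, c lam / b lam = Ffun μ σ a lam := fun lam h =>
    cb_eq μ σ a hμ hσ ha βp βm b c hβp hβm hb hc lam h
  have htend : Tendsto (fun lam => (1 - c lam / b lam) / lam) (nhdsWithin 0 (Set.Ioi 0))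
      (nhds L) := by
    refine Tendsto.congr' ?_ (Ffun_tendsto μ σ a hμ hσ)
    filter_upwards [self_mem_nhdsWithin] with x hx
    rw [hcbF x hx]
  refine ⟨?_, htend⟩
  have hσ2 : (0:ℝ) < σ ^ 2 := by positivity
  have hL0 : 0 ≤ L := by
    rw [hL]
    apply div_nonneg _ (by positivity)
    have h := Real.add_one_le_exp (2 * μ * a / σ ^ 2)
    have h2 : σ ^ 2 * (2 * μ * a / σ ^ 2) = 2 * μ * a := by field_simp
    nlinarith
  set lamseq : ℕ → ℝ := fun n => 1 / ((n:ℝ) + 1) with hlamseq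
  have hlampos : ∀ n, 0 < lamseq n := fun n => by positivity
  have hlamtend : Tendsto lamseq atTop (nhdsWithin 0 (Set.Ioi 0)) :=
    tendsto_nhdsWithin_of_tendsto_nhds_of_eventually_within _
      tendsto_one_div_add_atTop_nhds_zero_nat
      (Eventually.of_forall fun n => hlampos n)
  have hmeasG : ∀ lam : ℝ, Measurable (fun ω => (1 - Real.exp (-lam * T ω)) / lam) := fun lam =>
    (measurable_const.sub ((hTmeas.const_mul (-lam)).exp)).div_const lam
  have hGnn : ∀ lam, 0 < lam → ∀ ω, 0 ≤ (1 - Real.exp (-lam * T ω)) / lam := by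
    intro lam hlam ω
    apply div_nonneg _ (le_of_lt hlam)
    have h1 : Real.exp (-lam * T ω) ≤ 1 := Real.exp_le_one_iff.2 (by nlinarith [hTnn ω])
    linarith
  have hGint : ∀ lam, 0 < lam → Integrable (fun ω => (1 - Real.exp (-lam * T ω)) / lam) P := by
    intro lam hlam
    apply Integrable.mono' (integrable_const (1 / lam)) (hmeasG lam).aestronglyMeasurable
    apply Eventually.of_forall; intro ω
    rw [Real.norm_eq_abs, abs_of_nonneg (hGnn lam hlam ω)]
    have h1 : 1 - Real.exp (-lam * T ω) ≤ 1 := by nlinarith [Real.exp_pos (-lam * T ω)]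
    exact (div_le_div_iff_of_pos_right hlam).2 h1
  have hexpint : ∀ lam, 0 < lam → Integrable (fun ω => Real.exp (-lam * T ω)) P := by
    intro lam hlam
    apply Integrable.mono' (integrable_const 1)
      ((hTmeas.const_mul (-lam)).exp.aestronglyMeasurable)
    apply Eventually.of_forall; intro ω
    rw [Real.norm_eq_abs, abs_of_nonneg (Real.exp_pos _).le]
    exact Real.exp_le_one_iff.2 (by nlinarith [hTnn ω])
  have hint_eq : ∀ lam, 0 < lam →
      ∫ ω, (1 - Real.exp (-lam * T ω)) / lam ∂P = (1 - c lam / b lam) / lam := by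
    intro lam hlam
    rw [integral_div, integral_sub (integrable_const 1) (hexpint lam hlam), hLT lam hlam]
    simp
  have hmono : ∀ ω, Monotone fun n =>
      ENNReal.ofReal ((1 - Real.exp (-(lamseq n) * T ω)) / lamseq n) := by
    intro ω
    apply monotone_nat_of_le_succ
    intro n
    apply ENNReal.ofReal_le_ofReal
    apply slope_anti (T ω) (hlampos (n + 1))
    apply one_div_le_one_div_of_le (by positivity)
    push_cast
    linarith
  have hptw : ∀ ω, Tendsto (fun n =>
      ENNReal.ofReal ((1 - Real.exp (-(lamseq n) * T ω)) / lamseq n)) atTop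
      (nhds (ENNReal.ofReal (T ω))) := by
    intro ω
    apply (ENNReal.continuous_ofReal.tendsto _).comp
    have h2 : Tendsto lamseq atTop (nhdsWithin 0 {(0:ℝ)}ᶜ) :=
      tendsto_nhdsWithin_of_tendsto_nhds_of_eventually_within _
        tendsto_one_div_add_atTop_nhds_zero_nat
        (Eventually.of_forall fun n => Set.mem_compl_singleton_iff.2 (ne_of_gt (hlampos n)))
    exact (tendsto_one_sub_exp (T ω)).comp h2
  have hMCT := lintegral_tendsto_of_tendsto_of_monotone
    (f := fun n ω => ENNReal.ofReal ((1 - Real.exp (-(lamseq n) * T ω)) / lamseq n))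
    (F := fun ω => ENNReal.ofReal (T ω)) (μ := P)
    (fun n => ((hmeasG (lamseq n)).ennreal_ofReal).aemeasurable)
    (Eventually.of_forall hmono) (Eventually.of_forall hptw)
  have hlid : ∀ n, ∫⁻ ω, ENNReal.ofReal ((1 - Real.exp (-(lamseq n) * T ω)) / lamseq n) ∂P
      = ENNReal.ofReal ((1 - c (lamseq n) / b (lamseq n)) / lamseq n) := by
    intro n
    rw [← ofReal_integral_eq_lintegral_ofReal (hGint _ (hlampos n))
      (Eventually.of_forall (hGnn _ (hlampos n)))]
    rw [hint_eq _ (hlampos n)]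
  have hlim2 : Tendsto (fun n => ENNReal.ofReal ((1 - c (lamseq n) / b (lamseq n)) / lamseq n))
      atTop (nhds (ENNReal.ofReal L)) :=
    (ENNReal.continuous_ofReal.tendsto L).comp (htend.comp hlamtend)
  have hkey : ∫⁻ ω, ENNReal.ofReal (T ω) ∂P = ENNReal.ofReal L :=
    tendsto_nhds_unique (hMCT.congr hlid) hlim2
  have hfin : ∫ ω, T ω ∂P = (∫⁻ ω, ENNReal.ofReal (T ω) ∂P).toReal :=
    integral_eq_lintegral_of_nonneg_ae (Eventually.of_forall hTnn) hTmeas.aestronglyMeasurable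
  rw [hfin, hkey, ENNReal.toReal_ofReal hL0]
end
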